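/- Let q be a prime power and k \le n positive integers. Then \sum_{l=0}^{k} q^{l(l-1)} \binom{k}{l}_q \prod_{i=l+1}^{k} (q^n - q^i) = q^{n(k-1)}(q^n - q^k + 1). -/
import Mathlib


open Finset

/-- The Gaussian binomial coefficient `[d choose j]_q`, defined via the q-Pascal recursion. -/
def qb {R : Type*} [CommRing R] (q : R) : ℕ → ℕ → R
  | _, 0 => 1
  | 0, _ + 1 => 0
  | n + 1, k + 1 => qb q n k + q ^ (k + 1) * qb q n (k + 1)

lemma qb_zero {R : Type*} [CommRing R] (q : R) : ∀ n k : ℕ, n < k → qb q n k = 0 := by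
  intro n
  induction n with
  | zero => intro k hk; match k, hk with | k+1, _ => rfl
  | succ n ih =>
    intro k hk
    match k, hk with
    | k+1, hk =>
      show qb q n k + q ^ (k+1) * qb q n (k+1) = 0
      rw [ih k (by omega), ih (k+1) (by omega)]; ring

lemma qb_zero' {R : Type*} [CommRing R] (q : R) (n : ℕ) : qb q n 0 = 1 := by
  cases n <;> rfl

lemma qb_pascal' {R : Type*} [CommRing R] (q : R) :
    ∀ n k : ℕ, qb q (n + 1) (k + 1) = q ^ (n - k) * qb q n k + qb q n (k + 1) := by
  intro n
  induction n with
  | zero =>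
    intro k
    match k with
    | 0 =>
      show qb q 0 0 + q^1 * qb q 0 1 = q ^ (0-0) * qb q 0 0 + qb q 0 1
      show (1:R) + q^1 * 0 = q^(0-0) * 1 + 0
      simp
    | k+1 =>
      show qb q 0 (k+1) + q^(k+2) * qb q 0 (k+2) = q ^ (0-(k+1)) * qb q 0 (k+1) + qb q 0 (k+2)
      show (0:R) + q^(k+2) * 0 = q ^ (0-(k+1)) * 0 + 0
      simp
  | succ n ih =>
    intro k
    match k with
    | 0 =>
      show qb q (n+1) 0 + q^1 * qb q (n+1) 1 = q ^ (n+1) * qb q (n+1) 0 + qb q (n+1) 1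
      have h1 : qb q (n+1) 1 = q ^ (n-0) * qb q n 0 + qb q n 1 := ih 0
      have h2 : qb q (n+1) 1 = qb q n 0 + q ^ 1 * qb q n 1 := rfl
      rw [Nat.sub_zero, qb_zero'] at h1
      rw [qb_zero'] at h2
      rw [qb_zero']
      linear_combination q * h1 - h2
    | k+1 =>
      rcases Nat.lt_or_ge n (k+1) with hkn | hkn
      · rcases Nat.lt_or_ge n k with hnk | hnk
        · have z1 : qb q (n+1) (k+2) = 0 := qb_zero q _ _ (by omega)
          have z2 : qb q (n+2) (k+2) = 0 := qb_zero q _ _ (by omega)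
          have z3 : qb q (n+1) (k+1) = 0 := qb_zero q _ _ (by omega)
          rw [z1, z2, z3]; ring
        · -- n = k
          have hnk' : n = k := by omega
          subst hnk'
          have z1 : qb q (n+1) (n+2) = 0 := qb_zero q _ _ (by omega)
          have D : qb q (n+2) (n+2) = qb q (n+1) (n+1) + q^(n+2) * qb q (n+1) (n+2) := rfl
          rw [show n+1-(n+1) = 0 by omega]
          rw [D, z1]; ring
      · obtain ⟨e, he⟩ : ∃ e, n = k + 1 + e := ⟨n - (k+1), by omega⟩
        subst he
        have R1 := ih k
        rw [show k+1+e - k = e+1 by omega] at R1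
        have R2 := ih (k+1)
        rw [show k+1+e - (k+1) = e by omega] at R2
        have D1 : qb q (k+1+e+1) (k+1) = qb q (k+1+e) k + q^(k+1) * qb q (k+1+e) (k+1) := rfl
        have D2 : qb q (k+1+e+1) (k+2) = qb q (k+1+e) (k+1) + q^(k+2) * qb q (k+1+e) (k+2) := rfl
        have E1 : (1 - q^(e+1)) * qb q (k+1+e) k = (1 - q^(k+1)) * qb q (k+1+e) (k+1) := by
          linear_combination R1 - D1
        have E2 : (1 - q^e) * qb q (k+1+e) (k+1) = (1 - q^(k+2)) * qb q (k+1+e) (k+2) := by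
          linear_combination R2 - D2
        have Dtop : qb q (k+1+e+2) (k+2)
            = qb q (k+1+e+1) (k+1) + q^(k+2) * qb q (k+1+e+1) (k+2) := rfl
        show qb q (k+1+e+2) (k+2)
            = q ^ (k+1+e+1 - (k+1)) * qb q (k+1+e+1) (k+1) + qb q (k+1+e+1) (k+2)
        rw [show k+1+e+1 - (k+1) = e+1 by omega]
        linear_combination Dtop + (1 - q^(e+1)) * R1 - (1 - q^(k+2)) * D2 + q^(e+1) * E1 + q^(k+2) * E2

noncomputable def ff (q : ℚ) (k : ℕ) (y : ℚ) : ℚ :=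
  ∑ l ∈ range (k + 1), q ^ (l * (l - 1)) * qb q k l * ∏ i ∈ Icc (l + 1) k, (y - q ^ i)

lemma ff_rec (q : ℚ) (hq : q ≠ 0) (k : ℕ) (y : ℚ) :
    ff q (k + 1) y = (y - q ^ (k + 1)) * ff q k y + q ^ (2 * k) * ff q k (y / q) := by
  unfold ff
  rw [Finset.sum_range_succ' _ (k + 1)]
  have step : ∀ m ∈ range (k + 1),
      q ^ ((m+1) * (m+1-1)) * qb q (k+1) (m+1) * ∏ i ∈ Icc (m+1+1) (k+1), (y - q ^ i)
      = (q ^ ((m+1) * (m+1-1)) * qb q k (m+1) * ∏ i ∈ Icc (m+1+1) (k+1), (y - q ^ i))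
        + (q ^ (2*k) * (q ^ (m * (m-1)) * qb q k m * ∏ i ∈ Icc (m+1) k, (y/q - q ^ i))) := by
    intro m hm
    rw [mem_range] at hm
    rw [qb_pascal']
    have hprod : ∏ i ∈ Icc (m+1+1) (k+1), (y - q ^ i)
        = q ^ (k - m) * ∏ i ∈ Icc (m+1) k, (y/q - q ^ i) := by
      have hIcc : Icc (m+1+1) (k+1) = (Icc (m+1) k).map (addRightEmbedding 1) := by
        rw [Finset.map_add_right_Icc]
      rw [hIcc, Finset.prod_map]
      have hfac : ∀ i ∈ Icc (m+1) k, (y - q ^ (addRightEmbedding 1 i)) = q * (y/q - q ^ i) := by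
        intro i _
        simp only [addRightEmbedding_apply]
        field_simp
        ring
      rw [Finset.prod_congr rfl hfac, Finset.prod_mul_distrib, Finset.prod_const,
        Nat.card_Icc, show k + 1 - (m+1) = k - m by omega]
    have hpow : q ^ ((m+1)*(m+1-1)) * (q ^ (k - m) * qb q k m) * (q ^ (k-m) * ∏ i ∈ Icc (m+1) k, (y/q - q^i))
        = q ^ (2*k) * (q ^ (m * (m-1)) * qb q k m * ∏ i ∈ Icc (m+1) k, (y/q - q ^ i)) := by
      rw [show q^((m+1)*(m+1-1)) * (q^(k-m) * qb q k m) * (q^(k-m) * ∏ i ∈ Icc (m+1) k, (y/q - q^i))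
          = q^((m+1)*(m+1-1)) * q^(k-m) * q^(k-m) * (qb q k m * ∏ i ∈ Icc (m+1) k, (y/q - q^i)) by ring,
        ← pow_add, ← pow_add]
      have hexp : (m+1)*(m+1-1) + (k-m) + (k-m) = 2*k + m*(m-1) := by
        obtain ⟨d, rfl⟩ : ∃ d, k = m + d := ⟨k - m, by omega⟩
        cases m with
        | zero => simp; omega
        | succ s =>
          rw [Nat.succ_sub_one, Nat.succ_sub_one, show s+1+d - (s+1) = d by omega]
          ring
      rw [hexp, pow_add]
      ring
    calc q ^ ((m+1)*(m+1-1)) * (q ^ (k - m) * qb q k m + qb q k (m+1)) * ∏ i ∈ Icc (m+1+1) (k+1), (y - q ^ i)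
        = q ^ ((m+1)*(m+1-1)) * qb q k (m+1) * ∏ i ∈ Icc (m+1+1) (k+1), (y - q ^ i)
          + q ^ ((m+1)*(m+1-1)) * (q ^ (k - m) * qb q k m) * ∏ i ∈ Icc (m+1+1) (k+1), (y - q ^ i) := by ring
      _ = _ := by
          rw [hprod, hpow]
  rw [Finset.sum_congr rfl step, Finset.sum_add_distrib]
  have h0 : q ^ (0 * (0-1)) * qb q (k+1) 0 * ∏ i ∈ Icc (0+1) (k+1), (y - q ^ i)
      = q ^ (0 * (0-1)) * qb q k 0 * ∏ i ∈ Icc (0+1) (k+1), (y - q ^ i) := by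
    rw [qb_zero', qb_zero']
  rw [h0, add_right_comm]
  congr 1
  · rw [← Finset.sum_range_succ'
      (fun l => q ^ (l * (l-1)) * qb q k l * ∏ i ∈ Icc (l+1) (k+1), (y - q^i)) (k+1)]
    rw [Finset.sum_range_succ]
    rw [qb_zero q k (k+1) (by omega), mul_zero, zero_mul, add_zero]
    rw [mul_comm (y - q^(k+1)), Finset.sum_mul]
    apply Finset.sum_congr rfl
    intro l hl
    rw [mem_range] at hl
    rw [Finset.prod_Icc_succ_top (by omega : l + 1 ≤ k + 1)]
    ring
  · rw [Finset.mul_sum]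

lemma ff_closed (q : ℚ) (hq : q ≠ 0) :
    ∀ k : ℕ, 1 ≤ k → ∀ y : ℚ, ff q k y = y ^ (k - 1) * (y - q ^ k + 1) := by
  intro k hk
  induction k, hk using Nat.le_induction with
  | base =>
    intro y
    unfold ff
    rw [Finset.sum_range_succ, Finset.sum_range_succ, Finset.sum_range_zero]
    have h1 : qb q 1 0 = 1 := rfl
    have h2 : qb q 1 1 = 1 := by
      show qb q 0 0 + q^1 * qb q 0 1 = 1
      show (1:ℚ) + q^1 * 0 = 1
      ring
    rw [h1, h2]
    simp
  | succ k hk ih =>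
    intro y
    rw [ff_rec q hq, ih y, ih (y/q)]
    obtain ⟨j, rfl⟩ : ∃ j, k = j + 1 := ⟨k - 1, by omega⟩
    rw [show j + 1 - 1 = j by omega, show j + 1 + 1 - 1 = j + 1 by omega]
    rw [div_pow]
    have hqj : (q:ℚ) ^ j ≠ 0 := pow_ne_zero _ hq
    field_simp
    ring

lemma qb_map {R S : Type*} [CommRing R] [CommRing S] (f : R →+* S) (q : R) :
    ∀ n k : ℕ, f (qb q n k) = qb (f q) n k := by
  intro n
  induction n with
  | zero =>
    intro k
    match k with
    | 0 => simp [qb]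
    | k+1 => show f 0 = (0:S); simp
  | succ n ih =>
    intro k
    match k with
    | 0 => show f 1 = (1:S); simp
    | k+1 =>
      show f (qb q n k + q^(k+1) * qb q n (k+1)) = qb (f q) n k + (f q)^(k+1) * qb (f q) n (k+1)
      rw [map_add, map_mul, map_pow, ih, ih]

theorem stmt4 (q p m n k : ℕ) (hp : p.Prime) (hm : 0 < m) (hq : q = p ^ m)
    (hk : 0 < k) (hkn : k ≤ n) :
    ∑ l ∈ range (k + 1), (q : ℤ) ^ (l * (l - 1)) * qb (q : ℤ) k l *
        ∏ i ∈ Icc (l + 1) k, ((q : ℤ) ^ n - (q : ℤ) ^ i) =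
      (q : ℤ) ^ (n * (k - 1)) * ((q : ℤ) ^ n - (q : ℤ) ^ k + 1) := by
  have hq0 : q ≠ 0 := by
    subst hq; exact pow_ne_zero _ hp.ne_zero
  have hqQ : ((q:ℚ)) ≠ 0 := Nat.cast_ne_zero.mpr hq0
  have key := ff_closed (q:ℚ) hqQ k hk ((q:ℚ)^n)
  apply (Int.cast_injective (α := ℚ))
  have hcast : ∀ l : ℕ, ((qb ((q:ℕ):ℤ) k l : ℤ) : ℚ) = qb ((q:ℕ):ℚ) k l := by
    intro l
    have := qb_map (Int.castRingHom ℚ) ((q:ℕ):ℤ) k l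
    simpa using this
  push_cast [hcast]
  unfold ff at key
  rw [key, ← pow_mul]
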